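/- Let f : ℝᴺ → ℝ be twice continuously differentiable such that for every u ∈ ℝᴺ the Hessian of f at u is symmetric positive semidefinite with kernel exactly the span of 𝟙 = (1, …, 1)ᵀ. Fix a ∈ ℝ and set 𝒰_a = {u ∈ ℝᴺ : Σᵢ uᵢ = a}, and suppose there exists u₀ ∈ 𝒰_a with ∇f(u₀) = 0. Then f(u) → +∞ as ‖u‖ → ∞ with u ∈ 𝒰_a; in particular the restriction f|_{𝒰_a} is proper (preimages of compact sets intersected with 𝒰_a are compact), u₀ is the unique critical point of f|_{𝒰_a}, and f attains its minimum over 𝒰_a exactly at u₀. -/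

import Mathlib

open BigOperators Filter

set_option maxHeartbeats 1000000

lemma bilin_eq_zero {E : Type*} [NormedAddCommGroup E] [NormedSpace ℝ E]
    (B : E →L[ℝ] E →L[ℝ] ℝ) (hs : ∀ v w, B v w = B w v) (hp : ∀ v, 0 ≤ B v v)
    (v : E) (h : B v v = 0) (w : E) : B v w = 0 := by
  by_contra hne
  set s : ℝ := 2 * B v w with hsdef
  have hs0 : s ≠ 0 := by simpa [hsdef] using hne
  set t : ℝ := -s / (B w w + 1) with htdef
  have hw1 : 0 < B w w + 1 := by linarith [hp w]
  have hexp : B (v + t • w) (v + t • w) = t * s + t ^ 2 * B w w := by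
    simp only [map_add, map_smul, ContinuousLinearMap.add_apply,
      ContinuousLinearMap.smul_apply, smul_eq_mul, h]
    rw [hs w v]; ring
  have hneg : B (v + t • w) (v + t • w) < 0 := by
    rw [hexp, htdef]
    have he : -s / (B w w + 1) * s + (-s / (B w w + 1)) ^ 2 * B w w
        = -(s ^ 2) / (B w w + 1) ^ 2 := by field_simp; ring
    rw [he]
    have hs2 : 0 < s ^ 2 := by positivity
    exact div_neg_of_neg_of_pos (by linarith) (by positivity)
  exact absurd (hp _) (not_le.mpr hneg)

theorem ricci_potential_proper
    (N : ℕ) (f : (Fin N → ℝ) → ℝ) (hf : ContDiff ℝ 2 f)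
    (hsymm : ∀ u v w : Fin N → ℝ,
      fderiv ℝ (fderiv ℝ f) u v w = fderiv ℝ (fderiv ℝ f) u w v)
    (hpsd : ∀ u v : Fin N → ℝ, 0 ≤ fderiv ℝ (fderiv ℝ f) u v v)
    (hker : ∀ u v : Fin N → ℝ,
      (∀ w, fderiv ℝ (fderiv ℝ f) u v w = 0) ↔ ∃ c : ℝ, v = fun _ => c)
    (a : ℝ) (u₀ : Fin N → ℝ) (hu₀ : ∑ i, u₀ i = a)
    (hcrit : fderiv ℝ f u₀ = 0) :
    Filter.Tendsto f
      (Filter.cocompact (Fin N → ℝ) ⊓ Filter.principal {u : Fin N → ℝ | ∑ i, u i = a})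
      Filter.atTop ∧
    (∀ Kc : Set ℝ, IsCompact Kc →
      IsCompact (f ⁻¹' Kc ∩ {u : Fin N → ℝ | ∑ i, u i = a})) ∧
    (∀ u : Fin N → ℝ, ∑ i, u i = a →
      (∀ v : Fin N → ℝ, ∑ i, v i = 0 → fderiv ℝ f u v = 0) → u = u₀) ∧
    (∀ u : Fin N → ℝ, ∑ i, u i = a → u ≠ u₀ → f u₀ < f u) := by
  have hdf : Differentiable ℝ f := hf.differentiable (by norm_num)
  have hsumcont : Continuous (fun u : Fin N → ℝ => ∑ i, u i) :=
    continuous_finset_sum _ (fun i _ => continuous_apply i)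
  have hScl : IsClosed {u : Fin N → ℝ | ∑ i, u i = a} :=
    isClosed_eq hsumcont continuous_const
  -- first derivative along lines
  have hφ : ∀ x v : Fin N → ℝ, ∀ t : ℝ,
      HasDerivAt (fun s : ℝ => f (x + s • v)) (fderiv ℝ f (x + t • v) v) t := by
    intro x v t
    have hp : HasDerivAt (fun s : ℝ => x + s • v) v t := by
      simpa using ((hasDerivAt_id t).smul_const v).const_add x
    exact ((hdf (x + t • v)).hasFDerivAt).comp_hasDerivAt t hp
  -- second derivative along lines
  have hψ : ∀ x v : Fin N → ℝ, ∀ t : ℝ,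
      HasDerivAt (fun s : ℝ => fderiv ℝ f (x + s • v) v)
        (fderiv ℝ (fderiv ℝ f) (x + t • v) v v) t := by
    intro x v t
    have hp : HasDerivAt (fun s : ℝ => x + s • v) v t := by
      simpa using ((hasDerivAt_id t).smul_const v).const_add x
    have hd1 : ContDiff ℝ 1 (fderiv ℝ f) := hf.fderiv_right (by norm_num)
    have h2 : HasDerivAt (fun s : ℝ => fderiv ℝ f (x + s • v))
        (fderiv ℝ (fderiv ℝ f) (x + t • v) v) t :=
      ((hd1.differentiable one_ne_zero (x + t • v)).hasFDerivAt).comp_hasDerivAt t hp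
    simpa using h2.clm_apply (hasDerivAt_const t v)
  -- positivity of the Hessian on nonzero sum-zero vectors
  have hpos : ∀ u v : Fin N → ℝ, (∑ i, v i = 0) → v ≠ 0 →
      0 < fderiv ℝ (fderiv ℝ f) u v v := by
    intro u v hsum hv
    rcases (hpsd u v).lt_or_eq with h | h
    · exact h
    exfalso
    have hz : ∀ w, fderiv ℝ (fderiv ℝ f) u v w = 0 :=
      bilin_eq_zero (fderiv ℝ (fderiv ℝ f) u) (hsymm u) (hpsd u) v h.symm
    obtain ⟨c, hc⟩ := (hker u v).mp hz
    apply hv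
    rcases Nat.eq_zero_or_pos N with hN | hN
    · funext i; exact Fin.elim0 (hN ▸ i)
    · have hNc : (N : ℝ) * c = 0 := by
        have := hsum
        rw [hc] at this
        simpa [Finset.sum_const, mul_comm] using this
      have hc0 : c = 0 := by
        rcases mul_eq_zero.mp hNc with h' | h'
        · exact absurd h' (Nat.cast_ne_zero.mpr hN.ne')
        · exact h'
      rw [hc, hc0]; rfl
  -- strict monotonicity of the directional derivative along sum-zero lines
  have hmono : ∀ x v : Fin N → ℝ, (∑ i, v i = 0) → v ≠ 0 →
      StrictMono (fun t : ℝ => fderiv ℝ f (x + t • v) v) := by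
    intro x v hs hv
    apply strictMono_of_deriv_pos
    intro t
    rw [(hψ x v t).deriv]
    exact hpos _ v hs hv
  -- mean value theorem along lines
  have hslope : ∀ x v : Fin N → ℝ, ∀ t1 t2 : ℝ, t1 < t2 →
      ∃ c ∈ Set.Ioo t1 t2, fderiv ℝ f (x + c • v) v
        = (f (x + t2 • v) - f (x + t1 • v)) / (t2 - t1) := by
    intro x v t1 t2 h
    have hc : Continuous (fun s : ℝ => f (x + s • v)) :=
      hf.continuous.comp (by continuity)
    exact exists_hasDerivAt_eq_slope _ _ h hc.continuousOn (fun t _ => hφ x v t)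
  -- strict minimum at u₀
  have hmin : ∀ u : Fin N → ℝ, (∑ i, u i = a) → u ≠ u₀ → f u₀ < f u := by
    intro u hu hne
    set v := u - u₀ with hvdef
    have hsv : ∑ i, v i = 0 := by
      simp [hvdef, Finset.sum_sub_distrib, hu, hu₀]
    have hv : v ≠ 0 := sub_ne_zero.mpr hne
    obtain ⟨c, hc, hceq⟩ := hslope u₀ v 0 1 one_pos
    have h0 : fderiv ℝ f (u₀ + (0:ℝ) • v) v = 0 := by simp [hcrit]
    have hlt := hmono u₀ v hsv hv hc.1
    simp only [h0] at hlt
    rw [hceq] at hlt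
    have hu1 : u₀ + (1:ℝ) • v = u := by simp [hvdef]
    have hu0 : u₀ + (0:ℝ) • v = u₀ := by simp
    rw [hu1, hu0] at hlt
    simp at hlt
    linarith
  -- uniqueness of the critical point
  have huniq : ∀ u : Fin N → ℝ, (∑ i, u i = a) →
      (∀ v : Fin N → ℝ, ∑ i, v i = 0 → fderiv ℝ f u v = 0) → u = u₀ := by
    intro u hu hcu
    by_contra hne
    set v := u - u₀ with hvdef
    have hsv : ∑ i, v i = 0 := by
      simp [hvdef, Finset.sum_sub_distrib, hu, hu₀]
    have hv : v ≠ 0 := sub_ne_zero.mpr hne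
    have hlt := hmono u₀ v hsv hv (show (0:ℝ) < 1 from one_pos)
    have h0 : fderiv ℝ f (u₀ + (0:ℝ) • v) v = 0 := by simp [hcrit]
    have h1 : fderiv ℝ f (u₀ + (1:ℝ) • v) v = 0 := by
      have : u₀ + (1:ℝ) • v = u := by simp [hvdef]
      rw [this]; exact hcu v hsv
    simp only [h0, h1] at hlt
    exact lt_irrefl 0 hlt
  by_cases hS1 : ∀ u : Fin N → ℝ, (∑ i, u i = a) → u = u₀
  · -- degenerate case: the hyperplane is a single point
    refine ⟨?_, ?_, fun u hu _ => hS1 u hu, hmin⟩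
    · have hcc : ({u₀}ᶜ : Set (Fin N → ℝ)) ∈ cocompact (Fin N → ℝ) :=
        Filter.mem_cocompact.mpr ⟨{u₀}, isCompact_singleton, le_rfl⟩
      have hbot : (∅ : Set (Fin N → ℝ)) ∈
          cocompact (Fin N → ℝ) ⊓ 𝓟 {u : Fin N → ℝ | ∑ i, u i = a} := by
        apply Filter.mem_of_superset
          (Filter.inter_mem_inf hcc (Filter.mem_principal_self _))
        rintro u ⟨h1, h2⟩
        exact absurd (hS1 u h2) h1
      rw [Filter.empty_mem_iff_bot.mp hbot]
      exact tendsto_bot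
    · intro Kc _
      apply Set.Finite.isCompact
      apply Set.Finite.subset (Set.finite_singleton u₀)
      rintro u ⟨_, hu⟩
      exact hS1 u hu
  · -- main case
    push_neg at hS1
    obtain ⟨u₁, hu₁, hu₁ne⟩ := hS1
    set K : Set (Fin N → ℝ) := {v | (∑ i, v i = 0) ∧ ‖v‖ = 1} with hKdef
    have hsum_smul : ∀ (c : ℝ) (w : Fin N → ℝ), (∑ i, w i = 0) → ∑ i, (c • w) i = 0 := by
      intro c w hw
      simp [Pi.smul_apply, smul_eq_mul, ← Finset.mul_sum, hw]
    have hKne : K.Nonempty := by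
      set w := u₁ - u₀ with hwdef
      have hsw : ∑ i, w i = 0 := by
        simp [hwdef, Finset.sum_sub_distrib, hu₁, hu₀]
      have hw : w ≠ 0 := sub_ne_zero.mpr hu₁ne
      have hnw : 0 < ‖w‖ := norm_pos_iff.mpr hw
      refine ⟨‖w‖⁻¹ • w, hsum_smul _ _ hsw, ?_⟩
      rw [norm_smul, norm_inv, norm_norm, inv_mul_cancel₀ hnw.ne']
    have hKcl : IsClosed K :=
      (isClosed_eq hsumcont continuous_const).inter
        (isClosed_eq continuous_norm continuous_const)
    have hKcp : IsCompact K := by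
      apply (isCompact_closedBall (0 : Fin N → ℝ) 1).of_isClosed_subset hKcl
      intro v hv
      simp [Metric.mem_closedBall, dist_eq_norm, hv.2]
    obtain ⟨vm, hvmK, hvmmin⟩ := hKcp.exists_isMinOn hKne
      ((hf.continuous.comp (continuous_const.add continuous_id)).continuousOn :
        ContinuousOn (fun v : Fin N → ℝ => f (u₀ + v)) K)
    set m := f (u₀ + vm) - f u₀ with hmdef
    have hvmne : vm ≠ 0 := by
      intro h
      rw [h] at hvmK
      simpa using hvmK.2
    have hm : 0 < m := by
      have : f u₀ < f (u₀ + vm) := by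
        apply hmin
        · simp [Finset.sum_add_distrib, hu₀, hvmK.1]
        · intro h
          apply hvmne
          have := congrArg (fun z => z - u₀) h
          simpa using this
      linarith
    have hmK : ∀ v ∈ K, f u₀ + m ≤ f (u₀ + v) := by
      intro v hv
      have := isMinOn_iff.mp hvmmin v hv
      simp only [Function.comp, id, Pi.add_apply] at this
      simp only [hmdef]
      linarith
    -- coercivity bound
    have hcoer : ∀ u : Fin N → ℝ, (∑ i, u i = a) → 1 ≤ ‖u - u₀‖ →
        f u₀ + m * ‖u - u₀‖ ≤ f u := by
      intro u hu hr
      set r := ‖u - u₀‖ with hrdef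
      have hr0 : 0 < r := lt_of_lt_of_le one_pos hr
      set v := r⁻¹ • (u - u₀) with hvdef
      have hsw : ∑ i, (u - u₀) i = 0 := by
        simp [Finset.sum_sub_distrib, hu, hu₀]
      have hsv : ∑ i, v i = 0 := hsum_smul _ _ hsw
      have hnv : ‖v‖ = 1 := by
        rw [hvdef, norm_smul, norm_inv, Real.norm_eq_abs, abs_of_pos hr0,
          ← hrdef, inv_mul_cancel₀ hr0.ne']
      have hvne : v ≠ 0 := by
        intro h; rw [h] at hnv; simpa using hnv
      have hKv : v ∈ K := ⟨hsv, hnv⟩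
      have hu_eq : u₀ + r • v = u := by
        rw [hvdef, smul_smul, mul_inv_cancel₀ hr0.ne', one_smul]
        abel
      obtain ⟨c₀, hc₀, hceq₀⟩ := hslope u₀ v 0 1 one_pos
      have h1 : m ≤ fderiv ℝ f (u₀ + c₀ • v) v := by
        rw [hceq₀]
        have := hmK v hKv
        simp only [one_smul, zero_smul, add_zero, sub_zero, div_one]
        linarith
      rcases eq_or_lt_of_le hr with heq | hlt
      · have huv : u₀ + v = u := by
          rw [← hu_eq, ← heq, one_smul]
        rw [← heq, mul_one, ← huv]
        exact hmK v hKv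
      · obtain ⟨c, hc, hceq⟩ := hslope u₀ v 1 r hlt
        have h2 : fderiv ℝ f (u₀ + c₀ • v) v ≤ fderiv ℝ f (u₀ + c • v) v :=
          (hmono u₀ v hsv hvne (lt_trans hc₀.2 hc.1)).le
        have h3 : m ≤ (f (u₀ + r • v) - f (u₀ + (1:ℝ) • v)) / (r - 1) := by
          rw [← hceq]; exact le_trans h1 h2
        have hr1 : 0 < r - 1 := by linarith
        have h3' : m * (r - 1) ≤ f (u₀ + r • v) - f (u₀ + (1:ℝ) • v) :=
          (le_div_iff₀ hr1).mp h3
        have h4 : f u₀ + m ≤ f (u₀ + (1:ℝ) • v) := by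
          rw [one_smul]; exact hmK v hKv
        rw [hu_eq] at h3'
        nlinarith
    refine ⟨?_, ?_, huniq, hmin⟩
    · rw [Filter.tendsto_atTop]
      intro b
      set R := max 1 ((b - f u₀) / m) with hRdef
      have hcc : ((Metric.closedBall u₀ R)ᶜ : Set (Fin N → ℝ)) ∈ cocompact (Fin N → ℝ) :=
        Filter.mem_cocompact.mpr ⟨_, isCompact_closedBall u₀ R, le_rfl⟩
      filter_upwards [Filter.inter_mem_inf hcc (Filter.mem_principal_self _)]
        with u hu
      obtain ⟨h1, h2⟩ := hu
      have hd : R < ‖u - u₀‖ := by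
        have : ¬ dist u u₀ ≤ R := fun h => h1 (Metric.mem_closedBall.mpr h)
        rw [dist_eq_norm] at this
        linarith [not_le.mp this]
      have h1le : (1:ℝ) ≤ ‖u - u₀‖ := le_trans (le_max_left _ _) hd.le
      have hco := hcoer u h2 h1le
      have hmb : b - f u₀ ≤ m * ‖u - u₀‖ := by
        have hstep : (b - f u₀) / m ≤ ‖u - u₀‖ :=
          le_trans (le_max_right 1 _) hd.le
        calc b - f u₀ = m * ((b - f u₀) / m) := by field_simp
        _ ≤ m * ‖u - u₀‖ := mul_le_mul_of_nonneg_left hstep hm.le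
      linarith
    · intro Kc hKc
      obtain ⟨C, hC⟩ := hKc.bddAbove
      set R := max 1 ((C - f u₀) / m) with hRdef
      apply (isCompact_closedBall u₀ R).of_isClosed_subset
      · exact (hKc.isClosed.preimage hf.continuous).inter hScl
      · rintro u ⟨huK, huS⟩
        rw [Metric.mem_closedBall, dist_eq_norm]
        by_contra hgt
        push_neg at hgt
        have h1le : (1:ℝ) ≤ ‖u - u₀‖ := le_trans (le_max_left _ _) hgt.le
        have hco := hcoer u huS h1le
        have hfu : f u ≤ C := hC huK
        have hmR : C - f u₀ ≤ m * R := by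
          calc C - f u₀ = m * ((C - f u₀) / m) := by field_simp
          _ ≤ m * R := mul_le_mul_of_nonneg_left (le_max_right 1 _) hm.le
        have hlt2 : m * R < m * ‖u - u₀‖ := mul_lt_mul_of_pos_left hgt hm
        linarith
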